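/- For all p ≥ 2 and n ≥ 1, the number a(n,p) of p-ascent sequences of length n avoiding the pattern 012 satisfies the recursion a(n,p) = a(n,p-1) + Σ_{k=2}^{n} a(k-1, p-1)·2^(n-k). -/

import Mathlib

/-- Number of ascents of a sequence: indices j with a_j < a_{j+1}. -/
def ascN (l : List ℕ) : ℕ := (l.zip l.tail).countP (fun q => decide (q.1 < q.2))

/-- `a` is a p-ascent sequence: nonempty, starts with 0, and each later entry
is at most `p` plus the number of ascents of the preceding prefix. -/
def IsPAsc (p : ℕ) (a : List ℕ) : Prop :=
  a.head? = some 0 ∧ ∀ i : Fin a.length, 1 ≤ i.val → a.get i ≤ p + ascN (a.take i.val)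

def Avoids01 (a : List ℕ) : Prop := ∀ i j : Fin a.length, i < j → ¬ a.get i < a.get j

def Avoids10 (a : List ℕ) : Prop := ∀ i j : Fin a.length, i < j → ¬ a.get j < a.get i

def Avoids012 (a : List ℕ) : Prop :=
  ∀ i j k : Fin a.length, i < j → j < k → ¬ (a.get i < a.get j ∧ a.get j < a.get k)

/-- primitive: no two equal consecutive letters -/
def Primitive (a : List ℕ) : Prop := a.Chain' (· ≠ ·)

/-- positive entries bounded by q and weakly decreasing -/
def Pg (q : ℕ) (a : List ℕ) : Prop :=
  (∀ x ∈ a, x ≤ q) ∧ a.Pairwise (fun x y => 0 < x → y ≤ x)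

lemma ascN_eq_zero {l : List ℕ} (h : ∀ x ∈ l, x = 0) : ascN l = 0 := by
  unfold ascN
  rw [List.countP_eq_zero]
  rintro ⟨x, y⟩ hq
  have hm := List.of_mem_zip hq
  have h1 := h x hm.1
  have h2 := h y (List.mem_of_mem_tail hm.2)
  simp [h1, h2]

lemma Pg_cons_zero (q : ℕ) (t : List ℕ) : Pg q (0 :: t) ↔ Pg q t := by
  simp [Pg]

lemma Pg_cons_pos (q v : ℕ) (t : List ℕ) (hv : 0 < v) :
    Pg q (v :: t) ↔ v ≤ q ∧ Pg v t := by
  constructor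
  · rintro ⟨hle, hp⟩
    rw [List.pairwise_cons] at hp
    exact ⟨hle _ List.mem_cons_self,
      ⟨fun x hx => hp.1 x hx hv, hp.2⟩⟩
  · rintro ⟨hvq, hle, hp⟩
    refine ⟨?_, List.pairwise_cons.2 ⟨fun x hx _ => hle x hx, hp⟩⟩
    intro x hx
    rcases List.mem_cons.1 hx with rfl | h
    · exact hvq
    · exact le_trans (hle x h) hvq

lemma isPAsc_avoids_iff (q : ℕ) (a : List ℕ) :
    (IsPAsc q a ∧ Avoids012 a) ↔ (a.head? = some 0 ∧ Pg q a) := by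
  constructor
  · rintro ⟨⟨hh, hb⟩, hav⟩
    have hlen : 0 < a.length := by
      cases a with
      | nil => simp at hh
      | cons x t => simp
    have h0 : a.get ⟨0, hlen⟩ = 0 := by
      cases a with
      | nil => simp at hh
      | cons x t => simpa using hh
    have hpw : a.Pairwise (fun x y => 0 < x → y ≤ x) := by
      rw [List.pairwise_iff_get]
      intro i j hij hpos
      by_contra hlt
      push_neg at hlt
      have hi0 : (⟨0, hlen⟩ : Fin a.length) < i := by
        rcases Nat.eq_zero_or_pos i.val with h | h
        · exfalso
          have : i = ⟨0, hlen⟩ := Fin.ext h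
          rw [this, h0] at hpos
          exact lt_irrefl 0 hpos
        · exact h
      refine hav ⟨0, hlen⟩ i j hi0 hij ⟨?_, hlt⟩
      rw [h0]; exact hpos
    refine ⟨hh, ?_, hpw⟩
    have key : ∀ m (hm : m < a.length), a.get ⟨m, hm⟩ ≤ q := by
      intro m
      induction m using Nat.strong_induction_on with
      | _ m ih =>
        intro hm
        by_cases hz : a.get ⟨m, hm⟩ = 0
        · omega
        · by_cases hex : ∃ j, ∃ (hj : j < m), a.get ⟨j, by omega⟩ ≠ 0
          · obtain ⟨j, hj, hjp⟩ := hex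
            have h1 := ih j hj (by omega)
            have h2 := (List.pairwise_iff_get.1 hpw) ⟨j, by omega⟩ ⟨m, hm⟩ hj
              (Nat.pos_of_ne_zero hjp)
            exact le_trans h2 h1
          · push_neg at hex
            have hm1 : 1 ≤ m := by
              rcases Nat.eq_zero_or_pos m with rfl | h
              · exact absurd h0 hz
              · exact h
            have hbm := hb ⟨m, hm⟩ hm1
            have hasc : ascN (a.take m) = 0 := by
              apply ascN_eq_zero
              intro x hx
              rw [List.mem_iff_getElem] at hx
              obtain ⟨j, hj, hxe⟩ := hx
              have hjm : j < m := by
                simp [List.length_take] at hj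
                omega
              have := hex j hjm
              simp only [List.get_eq_getElem] at this
              rw [← hxe, List.getElem_take]
              exact this
            simpa [hasc] using hbm
    intro x hx
    rw [List.mem_iff_getElem] at hx
    obtain ⟨i, hi, rfl⟩ := hx
    simpa using key i hi
  · rintro ⟨hh, hble, hpw⟩
    refine ⟨⟨hh, ?_⟩, ?_⟩
    · intro i hi
      exact le_trans (hble _ (by rw [List.get_eq_getElem]; exact List.getElem_mem _)) (Nat.le_add_right q _)
    · intro i j k hij hjk ⟨h1, h2⟩
      have := (List.pairwise_iff_get.1 hpw) j k hjk
        (lt_of_le_of_lt (Nat.zero_le _) h1)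
      omega

lemma Pg_nil (q : ℕ) : Pg q [] := by simp [Pg]

def Fs : ℕ → ℕ → Finset (List ℕ)
  | _, 0 => {[]}
  | q, m+1 => ((Fs q m).image (List.cons 0)) ∪
      (Finset.Icc 1 q).biUnion (fun v => (Fs v m).image (List.cons v))
  termination_by _ m => m

def U : ℕ → ℕ → ℕ
  | _, 0 => 1
  | q, m+1 => U q m + ∑ v ∈ Finset.Icc 1 q, U v m
  termination_by _ m => m

lemma mem_Fs : ∀ (m q : ℕ) (a : List ℕ), a ∈ Fs q m ↔ a.length = m ∧ Pg q a := by
  intro m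
  induction m with
  | zero =>
    intro q a
    simp only [Fs, Finset.mem_singleton, List.length_eq_zero_iff]
    constructor
    · rintro rfl; exact ⟨rfl, Pg_nil q⟩
    · rintro ⟨rfl, _⟩; rfl
  | succ m ih =>
    intro q a
    cases a with
    | nil =>
      simp [Fs]
    | cons v t =>
      simp only [Fs, Finset.mem_union, Finset.mem_image, Finset.mem_biUnion,
        Finset.mem_Icc, List.length_cons, Nat.succ.injEq]
      constructor
      · rintro (⟨t', ht', heq⟩ | ⟨w, ⟨hw1, hw2⟩, t', ht', heq⟩)
        · obtain ⟨h1, h2⟩ := List.cons.injEq _ _ _ _ ▸ heq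
          subst h2
          rw [ih] at ht'
          rw [← h1]
          exact ⟨ht'.1, (Pg_cons_zero q t').2 ht'.2⟩
        · obtain ⟨h1, h2⟩ := List.cons.injEq _ _ _ _ ▸ heq
          subst h2
          rw [ih] at ht'
          rw [← h1]
          exact ⟨ht'.1, (Pg_cons_pos q w t' (by omega)).2 ⟨hw2, ht'.2⟩⟩
      · rintro ⟨hl, hP⟩
        by_cases hv : v = 0
        · subst hv
          exact Or.inl ⟨t, (ih q t).2 ⟨hl, (Pg_cons_zero q t).1 hP⟩, rfl⟩
        · have hv' : 0 < v := Nat.pos_of_ne_zero hv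
          obtain ⟨hvq, hPv⟩ := (Pg_cons_pos q v t hv').1 hP
          exact Or.inr ⟨v, ⟨hv', hvq⟩, t, (ih v t).2 ⟨hl, hPv⟩, rfl⟩

lemma Fs_card : ∀ (m q : ℕ), (Fs q m).card = U q m := by
  intro m
  induction m with
  | zero => intro q; simp [Fs, U]
  | succ m ih =>
    intro q
    have hdisj : Disjoint ((Fs q m).image (List.cons 0))
        ((Finset.Icc 1 q).biUnion (fun v => (Fs v m).image (List.cons v))) := by
      rw [Finset.disjoint_left]
      intro a h1 h2
      simp only [Finset.mem_image] at h1
      simp only [Finset.mem_biUnion, Finset.mem_image, Finset.mem_Icc] at h2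
      obtain ⟨t, _, rfl⟩ := h1
      obtain ⟨v, ⟨hv1, _⟩, t', _, heq⟩ := h2
      rw [List.cons.injEq] at heq
      omega
    have hpair : ∀ v ∈ Finset.Icc 1 q, ∀ w ∈ Finset.Icc 1 q, v ≠ w →
        Disjoint ((Fs v m).image (List.cons v)) ((Fs w m).image (List.cons w)) := by
      intro v _ w _ hvw
      rw [Finset.disjoint_left]
      intro a h1 h2
      simp only [Finset.mem_image] at h1 h2
      obtain ⟨t, _, rfl⟩ := h1
      obtain ⟨t', _, heq⟩ := h2
      rw [List.cons.injEq] at heq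
      exact hvw heq.1.symm
    rw [show Fs q (m+1) = ((Fs q m).image (List.cons 0)) ∪
      (Finset.Icc 1 q).biUnion (fun v => (Fs v m).image (List.cons v)) from by rw [Fs],
      show U q (m+1) = U q m + ∑ v ∈ Finset.Icc 1 q, U v m from by rw [U]]
    rw [Finset.card_union_of_disjoint hdisj,
      Finset.card_image_of_injective _ (List.cons_injective),
      Finset.card_biUnion hpair, ih]
    congr 1
    apply Finset.sum_congr rfl
    intro v _
    rw [Finset.card_image_of_injective _ (List.cons_injective), ih]

lemma U_zero (q : ℕ) : U q 0 = 1 := by rw [U]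

lemma U_succ (q m : ℕ) : U q (m+1) = U q m + ∑ v ∈ Finset.Icc 1 q, U v m := by rw [U]

lemma count_eq (q n : ℕ) (hn : 1 ≤ n) :
    Set.ncard {a : List ℕ | a.length = n ∧ IsPAsc q a ∧ Avoids012 a} = U q (n-1) := by
  have hset : {a : List ℕ | a.length = n ∧ IsPAsc q a ∧ Avoids012 a}
      = ↑((Fs q (n-1)).image (List.cons 0)) := by
    ext a
    simp only [Set.mem_setOf_eq, Finset.coe_image, Set.mem_image, Finset.mem_coe, mem_Fs]
    constructor
    · rintro ⟨hlen, hrest⟩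
      rw [isPAsc_avoids_iff] at hrest
      obtain ⟨hh, hP⟩ := hrest
      cases a with
      | nil => simp at hh
      | cons x t =>
        have hx : x = 0 := by simpa using hh
        subst hx
        refine ⟨t, ⟨?_, (Pg_cons_zero q t).1 hP⟩, rfl⟩
        simp at hlen
        omega
    · rintro ⟨t, ⟨hlen, hP⟩, rfl⟩
      refine ⟨by simp [hlen]; omega, ?_⟩
      rw [isPAsc_avoids_iff]
      exact ⟨rfl, (Pg_cons_zero q t).2 hP⟩
  rw [hset, Set.ncard_coe_finset,
    Finset.card_image_of_injective _ (List.cons_injective), Fs_card]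

lemma U_succ_eq (p m : ℕ) :
    U (p+1) m = U p m + ∑ j ∈ Finset.range m, U p j * 2 ^ (m - 1 - j) := by
  induction m with
  | zero => simp [U_zero]
  | succ m ih =>
    rw [U_succ, U_succ, Finset.sum_Icc_succ_top (by omega : 1 ≤ p + 1), ih,
      Finset.sum_range_succ]
    have h2 : ∑ j ∈ Finset.range m, U p j * 2 ^ (m + 1 - 1 - j)
        = 2 * ∑ j ∈ Finset.range m, U p j * 2 ^ (m - 1 - j) := by
      rw [Finset.mul_sum]
      apply Finset.sum_congr rfl
      intro j hj
      rw [Finset.mem_range] at hj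
      rw [show m + 1 - 1 - j = (m - 1 - j) + 1 by omega, pow_succ]
      ring
    rw [h2]
    have h3 : m + 1 - 1 - m = 0 := by omega
    rw [h3, pow_zero, mul_one]
    ring

lemma reindex (c : ℕ → ℕ) (n : ℕ) :
    ∑ k ∈ Finset.Icc 2 n, c (k - 2) * 2 ^ (n - k)
      = ∑ j ∈ Finset.range (n - 1), c j * 2 ^ (n - 1 - 1 - j) := by
  have himg : Finset.Icc 2 n = (Finset.range (n - 1)).image (· + 2) := by
    ext k
    simp only [Finset.mem_Icc, Finset.mem_image, Finset.mem_range]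
    constructor
    · intro ⟨h1, h2⟩; exact ⟨k - 2, by omega, by omega⟩
    · rintro ⟨j, hj, rfl⟩; omega
  rw [himg, Finset.sum_image (by intro x _ y _ h; beta_reduce at h; omega)]
  apply Finset.sum_congr rfl
  intro j hj
  have e1 : j + 2 - 2 = j := by omega
  have e2 : n - (j + 2) = n - 1 - 1 - j := by omega
  rw [e1, e2]

theorem stmt14 (n p : ℕ) (hp : 2 ≤ p) (hn : 1 ≤ n) :
    Set.ncard {a : List ℕ | a.length = n ∧ IsPAsc p a ∧ Avoids012 a} =
      Set.ncard {a : List ℕ | a.length = n ∧ IsPAsc (p - 1) a ∧ Avoids012 a} +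
        ∑ k ∈ Finset.Icc 2 n,
          Set.ncard {a : List ℕ | a.length = k - 1 ∧ IsPAsc (p - 1) a ∧ Avoids012 a} *
            2 ^ (n - k) := by
  rw [count_eq p n hn, count_eq (p - 1) n hn]
  have hsum : ∀ k ∈ Finset.Icc 2 n,
      Set.ncard {a : List ℕ | a.length = k - 1 ∧ IsPAsc (p - 1) a ∧ Avoids012 a} * 2 ^ (n - k)
        = U (p - 1) (k - 2) * 2 ^ (n - k) := by
    intro k hk
    rw [Finset.mem_Icc] at hk
    rw [count_eq (p - 1) (k - 1) (by omega)]
    rw [show k - 1 - 1 = k - 2 from by omega]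
  rw [Finset.sum_congr rfl hsum, reindex (fun j => U (p - 1) j) n]
  have h := U_succ_eq (p - 1) (n - 1)
  rw [show p - 1 + 1 = p by omega] at h
  exact h
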